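/- Let α > 0, p ∈ (1,∞) with conjugate exponent p', and let (q_n) be an r-lacunary sequence of positive reals (i.e. q_{n+1} ≥ r q_n for all n, with r > 1). Then sup_n Σ_{k ≠ n} ( q_n^{1/p} q_k^{1/p'} / (q_n/p + q_k/p') )^α ≤ p'^α/(r^{α/p} − 1) + p^α/(r^{α/p'} − 1). -/

import Mathlib

open MeasureTheory Set

private lemma inv_pow_rpow_aux (r c : ℝ) (hr : 0 ≤ r) (m : ℕ) :
    ((r ^ m)⁻¹ : ℝ) ^ c = ((r ^ c)⁻¹) ^ m := by
  rw [Real.inv_rpow (pow_nonneg hr m), ← Real.rpow_natCast r m, ← Real.rpow_mul hr,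
    mul_comm, Real.rpow_mul hr, Real.rpow_natCast, inv_pow]

theorem stmt1 (α p p' r : ℝ) (hα : 0 < α) (hp : 1 < p) (hr : 1 < r)
    (hp' : 1/p + 1/p' = 1)
    (q : ℕ → ℝ) (hq0 : ∀ n, 0 < q n) (hlac : ∀ n, r * q n ≤ q (n+1)) :
    ∀ n : ℕ, ∑' k : {k : ℕ // k ≠ n},
        ((q n ^ (1/p) * q (k:ℕ) ^ (1/p')) / (q n / p + q (k:ℕ) / p')) ^ α
      ≤ p' ^ α / (r ^ (α/p) - 1) + p ^ α / (r ^ (α/p') - 1) := by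
  intro n
  have hp0 : 0 < p := lt_trans one_pos hp
  have hr0 : 0 < r := lt_trans one_pos hr
  have h1p : 1/p < 1 := by rw [div_lt_one hp0]; exact hp
  have hp'inv : 0 < 1/p' := by linarith
  have hp'0 : 0 < p' := one_div_pos.mp hp'inv
  -- lacunarity
  have key : ∀ m j : ℕ, q m * r ^ j ≤ q (m + j) := by
    intro m j
    induction j with
    | zero => simp
    | succ j ih =>
      calc q m * r ^ (j+1) = r * (q m * r ^ j) := by ring
        _ ≤ r * q (m + j) := mul_le_mul_of_nonneg_left ih hr0.le
        _ ≤ q (m + j + 1) := hlac (m + j)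
  set A : ℝ := r ^ (α/p') with hAdef
  set B : ℝ := r ^ (α/p) with hBdef
  have hA : 1 < A := (Real.one_lt_rpow_iff_of_pos hr0).mpr (Or.inl ⟨hr, by positivity⟩)
  have hB : 1 < B := (Real.one_lt_rpow_iff_of_pos hr0).mpr (Or.inl ⟨hr, by positivity⟩)
  have hA0 : (0:ℝ) < A := lt_trans one_pos hA
  have hB0 : (0:ℝ) < B := lt_trans one_pos hB
  have hAi0 : (0:ℝ) < A⁻¹ := by positivity
  have hBi0 : (0:ℝ) < B⁻¹ := by positivity
  have hAi1 : A⁻¹ < 1 := inv_lt_one_of_one_lt₀ hA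
  have hBi1 : B⁻¹ < 1 := inv_lt_one_of_one_lt₀ hB
  set g : ℕ → ℝ := fun k => if k < n then p ^ α * A⁻¹ ^ (n - k)
    else if k = n then 0 else p' ^ α * B⁻¹ ^ (k - n) with hgdef
  have hgnn : ∀ k, 0 ≤ g k := by
    intro k
    simp only [hgdef]
    split_ifs <;> positivity
  have hgtail : ∀ i : ℕ, g (i + (n+1)) = (p' ^ α * B⁻¹) * B⁻¹ ^ i := by
    intro i
    simp only [hgdef]
    rw [if_neg (by omega), if_neg (by omega)]
    have h1 : i + (n+1) - n = i + 1 := by omega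
    rw [h1, pow_succ]
    ring
  have hsumg : Summable g := by
    rw [← summable_nat_add_iff (n+1)]
    simp only [hgtail]
    exact (summable_geometric_of_lt_one hBi0.le hBi1).mul_left _
  -- nonnegativity of terms
  have hnum : ∀ k : ℕ, 0 ≤ (q n ^ (1/p) * q k ^ (1/p')) / (q n / p + q k / p') := fun k =>
    div_nonneg (mul_nonneg (Real.rpow_nonneg (hq0 n).le _) (Real.rpow_nonneg (hq0 k).le _))
      (add_nonneg (div_nonneg (hq0 n).le hp0.le) (div_nonneg (hq0 k).le hp'0.le))
  have htnn : ∀ k : ℕ, 0 ≤ ((q n ^ (1/p) * q k ^ (1/p')) / (q n / p + q k / p')) ^ α :=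
    fun k => Real.rpow_nonneg (hnum k) _
  -- pointwise bound
  have hterm : ∀ k : ℕ, k ≠ n →
      ((q n ^ (1/p) * q k ^ (1/p')) / (q n / p + q k / p')) ^ α ≤ g k := by
    intro k hk
    have hqn := hq0 n
    have hqk := hq0 k
    rcases lt_or_gt_of_ne hk with hkn | hkn
    · -- k < n
      have hrm : (0:ℝ) < r ^ (n - k) := pow_pos hr0 _
      have h1 : q k * r ^ (n - k) ≤ q n := by
        have := key k (n - k)
        rwa [show k + (n - k) = n by omega] at this
      have hz : q k / q n ≤ (r ^ (n - k))⁻¹ := by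
        rw [div_le_iff₀ hqn, inv_mul_eq_div, le_div_iff₀ hrm]
        exact h1
      have hbase : (q n ^ (1/p) * q k ^ (1/p')) / (q n / p + q k / p')
          ≤ p * (q k / q n) ^ (1/p') := by
        have h2 : (q n ^ (1/p) * q k ^ (1/p')) / (q n / p + q k / p')
            ≤ (q n ^ (1/p) * q k ^ (1/p')) / (q n / p) := by
          apply div_le_div_of_nonneg_left (by positivity) (by positivity)
          have : 0 < q k / p' := by positivity
          linarith
        refine h2.trans_eq ?_
        have hqq : q n ^ (1/p) * q n ^ (1/p') = q n := by
          rw [← Real.rpow_add hqn, hp', Real.rpow_one]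
        rw [Real.div_rpow hqk.le hqn.le]
        have hn1 : q n ^ (1/p') ≠ 0 := by positivity
        field_simp
        linear_combination hqq
      have h3 : ((q n ^ (1/p) * q k ^ (1/p')) / (q n / p + q k / p')) ^ α
          ≤ (p * (q k / q n) ^ (1/p')) ^ α :=
        Real.rpow_le_rpow (hnum k) hbase hα.le
      refine h3.trans ?_
      simp only [hgdef]
      rw [if_pos hkn, Real.mul_rpow hp0.le (by positivity)]
      gcongr p ^ α * ?_
      calc ((q k / q n) ^ (1/p')) ^ α = (q k / q n) ^ (α/p') := by
            rw [← Real.rpow_mul (by positivity)]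
            congr 1
            ring
        _ ≤ ((r ^ (n - k))⁻¹) ^ (α/p') :=
            Real.rpow_le_rpow (by positivity) hz (by positivity)
        _ = A⁻¹ ^ (n - k) := by
            rw [inv_pow_rpow_aux r (α/p') hr0.le, ← hAdef]
    · -- n < k
      have hrm : (0:ℝ) < r ^ (k - n) := pow_pos hr0 _
      have h1 : q n * r ^ (k - n) ≤ q k := by
        have := key n (k - n)
        rwa [show n + (k - n) = k by omega] at this
      have hz : q n / q k ≤ (r ^ (k - n))⁻¹ := by
        rw [div_le_iff₀ hqk, inv_mul_eq_div, le_div_iff₀ hrm]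
        exact h1
      have hbase : (q n ^ (1/p) * q k ^ (1/p')) / (q n / p + q k / p')
          ≤ p' * (q n / q k) ^ (1/p) := by
        have h2 : (q n ^ (1/p) * q k ^ (1/p')) / (q n / p + q k / p')
            ≤ (q n ^ (1/p) * q k ^ (1/p')) / (q k / p') := by
          apply div_le_div_of_nonneg_left (by positivity) (by positivity)
          have : 0 < q n / p := by positivity
          linarith
        refine h2.trans_eq ?_
        have hqq : q k ^ (1/p) * q k ^ (1/p') = q k := by
          rw [← Real.rpow_add hqk, hp', Real.rpow_one]
        rw [Real.div_rpow hqn.le hqk.le]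
        have hn1 : q k ^ (1/p) ≠ 0 := by positivity
        field_simp
        linear_combination hqq
      have h3 : ((q n ^ (1/p) * q k ^ (1/p')) / (q n / p + q k / p')) ^ α
          ≤ (p' * (q n / q k) ^ (1/p)) ^ α :=
        Real.rpow_le_rpow (hnum k) hbase hα.le
      refine h3.trans ?_
      simp only [hgdef]
      rw [if_neg (by omega), if_neg (by omega), Real.mul_rpow hp'0.le (by positivity)]
      gcongr p' ^ α * ?_
      calc ((q n / q k) ^ (1/p)) ^ α = (q n / q k) ^ (α/p) := by
            rw [← Real.rpow_mul (by positivity)]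
            congr 1
            ring
        _ ≤ ((r ^ (k - n))⁻¹) ^ (α/p) :=
            Real.rpow_le_rpow (by positivity) hz (by positivity)
        _ = B⁻¹ ^ (k - n) := by
            rw [inv_pow_rpow_aux r (α/p) hr0.le, ← hBdef]
  -- summability of terms
  have hsumt : Summable (fun k : {k : ℕ // k ≠ n} =>
      ((q n ^ (1/p) * q (k:ℕ) ^ (1/p')) / (q n / p + q (k:ℕ) / p')) ^ α) :=
    Summable.of_nonneg_of_le (fun k => htnn k) (fun k => hterm k k.2) (hsumg.subtype _)
  calc ∑' k : {k : ℕ // k ≠ n},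
        ((q n ^ (1/p) * q (k:ℕ) ^ (1/p')) / (q n / p + q (k:ℕ) / p')) ^ α
      ≤ ∑' k : {k : ℕ // k ≠ n}, g k :=
        Summable.tsum_le_tsum (fun k => hterm k k.2) hsumt (hsumg.subtype _)
    _ = ∑' k, g k := by
        have e : (∑' k : {k : ℕ // k ≠ n}, g (k:ℕ))
            = ∑' x : ({k : ℕ | k ≠ n} : Set ℕ), g (x:ℕ) := rfl
        rw [e, tsum_subtype]
        exact tsum_congr fun k => by
          by_cases h : k = n
          · simp [Set.indicator, h, hgdef]
          · simp [Set.indicator, h]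
    _ = (∑ i ∈ Finset.range (n+1), g i) + ∑' i, g (i + (n+1)) :=
        (Summable.sum_add_tsum_nat_add (n+1) hsumg).symm
    _ ≤ p ^ α * (A - 1)⁻¹ + p' ^ α * (B - 1)⁻¹ := by
        gcongr
        · -- finite part
          rw [Finset.sum_range_succ, show g n = 0 by simp [hgdef], add_zero]
          have hsum_eq : ∑ i ∈ Finset.range n, g i
              = ∑ j ∈ Finset.range n, p ^ α * A⁻¹ ^ (j+1) := by
            rw [← Finset.sum_range_reflect]
            refine Finset.sum_congr rfl fun j hj => ?_
            simp only [Finset.mem_range] at hj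
            simp only [hgdef]
            rw [if_pos (by omega)]
            congr 2
            omega
          rw [hsum_eq, ← Finset.mul_sum]
          gcongr p ^ α * ?_
          have hs1 : Summable (fun j : ℕ => A⁻¹ ^ (j+1)) := by
            simpa only [pow_succ'] using (summable_geometric_of_lt_one hAi0.le hAi1).mul_left A⁻¹
          calc ∑ j ∈ Finset.range n, A⁻¹ ^ (j+1)
              ≤ ∑' j : ℕ, A⁻¹ ^ (j+1) :=
                Summable.sum_le_tsum _ (fun j _ => by positivity) hs1
            _ = A⁻¹ * (1 - A⁻¹)⁻¹ := by
                simp only [pow_succ']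
                rw [tsum_mul_left, tsum_geometric_of_lt_one hAi0.le hAi1]
            _ = (A - 1)⁻¹ := by
                rw [← mul_inv]
                congr 1
                field_simp
          
        · -- tail
          have ht : ∑' i, g (i + (n+1)) = p' ^ α * B⁻¹ * (1 - B⁻¹)⁻¹ := by
            simp only [hgtail]
            rw [tsum_mul_left, tsum_geometric_of_lt_one hBi0.le hBi1]
          rw [ht, mul_assoc]
          apply le_of_eq
          congr 1
          rw [← mul_inv]
          congr 1
          field_simp
    _ = p' ^ α / (B - 1) + p ^ α / (A - 1) := by ring
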